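/- Factorization formula: Q_{ρ_n + λ}(x_1,...,x_n | t) = ∏_{i=1}^n 2x_i · ∏_{1≤i<j≤n}(x_i + x_j) · s_λ(x_1,...,x_n | t), where ρ_n = (n, n−1, ..., 1) and λ = (λ_1 ≥ ... ≥ λ_n ≥ 0) is a partition. -/

import Mathlib

open Finset

lemma perm_pair_prod {F : Type*} [CommMonoid F] {n : ℕ} (w : Equiv.Perm (Fin n))
    (f : Fin n → Fin n → F) (hf : ∀ a b, f a b = f b a) :
    ∏ p ∈ Finset.univ.filter (fun p : Fin n × Fin n => p.1 < p.2), f (w p.1) (w p.2)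
      = ∏ p ∈ Finset.univ.filter (fun p : Fin n × Fin n => p.1 < p.2), f p.1 p.2 := by
  refine Finset.prod_bij'
    (fun p _ => if w p.1 < w p.2 then (w p.1, w p.2) else (w p.2, w p.1))
    (fun q _ => if w⁻¹ q.1 < w⁻¹ q.2 then (w⁻¹ q.1, w⁻¹ q.2) else (w⁻¹ q.2, w⁻¹ q.1))
    ?_ ?_ ?_ ?_ ?_
  · intro p hp
    simp only [mem_filter, mem_univ, true_and] at hp ⊢
    split_ifs with h
    · exact h
    · have hne : w p.1 ≠ w p.2 := fun he => hp.ne (w.injective he)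
      exact lt_of_le_of_ne (not_lt.mp h) (fun he => hne he.symm)
  · intro q hq
    simp only [mem_filter, mem_univ, true_and] at hq ⊢
    split_ifs with h
    · exact h
    · have hne : w⁻¹ q.1 ≠ w⁻¹ q.2 := fun he => hq.ne (w⁻¹.injective he)
      exact lt_of_le_of_ne (not_lt.mp h) (fun he => hne he.symm)
  · intro p hp
    simp only [mem_filter, mem_univ, true_and] at hp
    by_cases h : w p.1 < w p.2
    · simp [h, hp]
    · simp [h, hp.asymm]
  · intro q hq
    simp only [mem_filter, mem_univ, true_and] at hq
    by_cases h : w⁻¹ q.1 < w⁻¹ q.2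
    · simp only [Equiv.Perm.inv_def] at h
      simp [h, hq]
    · simp only [Equiv.Perm.inv_def] at h
      simp [h, hq.asymm]
  · intro p hp
    split_ifs with h
    · rfl
    · exact hf _ _

theorem stmt_4 {F : Type*} [Field F] (n : ℕ) (x : Fin n → F) (t : ℕ → F)
    (lam : ℕ → ℕ) (hlam : Antitone lam) (hx : Function.Injective x) :
    (2 : F) ^ n * ∑ w : Equiv.Perm (Fin n),
        (∏ i : Fin n,
            (x (w i) * ∏ m ∈ Finset.range (lam (i : ℕ) + (n - 1 - (i : ℕ))), (x (w i) - t m)))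
          * ∏ p ∈ Finset.univ.filter (fun p : Fin n × Fin n => p.1 < p.2),
              ((x (w p.1) + x (w p.2)) / (x (w p.1) - x (w p.2)))
      =
      (∏ i : Fin n, 2 * x i)
        * (∏ p ∈ Finset.univ.filter (fun p : Fin n × Fin n => p.1 < p.2), (x p.1 + x p.2))
        * ∑ w : Equiv.Perm (Fin n),
            (∏ i : Fin n, ∏ m ∈ Finset.range (lam (i : ℕ) + (n - 1 - (i : ℕ))), (x (w i) - t m))
              * ∏ p ∈ Finset.univ.filter (fun p : Fin n × Fin n => p.1 < p.2),
                  (x (w p.1) - x (w p.2))⁻¹ := by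
  have h2 : (∏ i : Fin n, 2 * x i) = (2:F)^n * ∏ i : Fin n, x i := by
    rw [Finset.prod_mul_distrib, Finset.prod_const, Finset.card_univ, Fintype.card_fin]
  simp only [Finset.mul_sum]
  apply Finset.sum_congr rfl
  intro w _
  have hxprod : (∏ i : Fin n, x (w i)) = ∏ i : Fin n, x i := Equiv.prod_comp w x
  have hsum : (∏ p ∈ Finset.univ.filter (fun p : Fin n × Fin n => p.1 < p.2),
      (x (w p.1) + x (w p.2))) = ∏ p ∈ Finset.univ.filter (fun p : Fin n × Fin n => p.1 < p.2),
      (x p.1 + x p.2) :=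
    perm_pair_prod w (fun a b => x a + x b) (fun a b => add_comm _ _)
  simp only [div_eq_mul_inv, Finset.prod_mul_distrib]
  rw [hxprod, hsum, Finset.prod_const, Finset.card_univ, Fintype.card_fin]
  ring
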